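/- Let κ ∈ (0, 1) and define η(s) = s · (log(s) + 1)^{−κ} for s ≥ 1. Then there exists S ≥ 1 such that for all ξ, ζ ∈ ℝ^n with ⟨ξ⟩ ≥ S and ⟨ζ⟩ ≥ S one has η(⟨ξ+ζ⟩) ≤ η(⟨ξ⟩) + η(⟨ζ⟩). -/
import Mathlib


noncomputable section

open Real Set Filter MeasureTheory

/-- Japanese bracket `⟨ξ⟩ = (1 + |ξ|²)^(1/2)`. -/
def jb {n : ℕ} (ξ : EuclideanSpace ℝ (Fin n)) : ℝ := Real.sqrt (1 + ‖ξ‖ ^ 2)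

/-- Partial derivative in the `i`-th coordinate direction. -/
def pd {n : ℕ} (i : Fin n) (f : EuclideanSpace ℝ (Fin n) → ℝ) :
    EuclideanSpace ℝ (Fin n) → ℝ :=
  fun x => fderiv ℝ f x (EuclideanSpace.single i 1)

/-- Iterated partial derivative `∂^α` for a multi-index `α : Fin n → ℕ`. -/
def md {n : ℕ} (α : Fin n → ℕ) (f : EuclideanSpace ℝ (Fin n) → ℝ) :
    EuclideanSpace ℝ (Fin n) → ℝ :=
  (List.finRange n).foldr (fun i g => (pd i)^[α i] g) f

lemma one_le_jb {n : ℕ} (ξ : EuclideanSpace ℝ (Fin n)) : 1 ≤ jb ξ := by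
  have h := Real.sqrt_le_sqrt (show (1:ℝ) ≤ 1 + ‖ξ‖ ^ 2 by nlinarith [sq_nonneg ‖ξ‖])
  simp only [Real.sqrt_one] at h; exact h.trans_eq rfl

lemma jb_triangle {n : ℕ} (ξ ζ : EuclideanSpace ℝ (Fin n)) :
    jb (ξ + ζ) ≤ jb ξ + jb ζ := by
  have ha : (0:ℝ) ≤ ‖ξ‖ := norm_nonneg _
  have hb : (0:ℝ) ≤ ‖ζ‖ := norm_nonneg _
  have hA : ‖ξ‖ ≤ jb ξ := by
    rw [jb]
    nlinarith [Real.sq_sqrt (show (0:ℝ) ≤ 1 + ‖ξ‖ ^ 2 by positivity),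
      Real.sqrt_nonneg (1 + ‖ξ‖ ^ 2)]
  have hB : ‖ζ‖ ≤ jb ζ := by
    rw [jb]
    nlinarith [Real.sq_sqrt (show (0:ℝ) ≤ 1 + ‖ζ‖ ^ 2 by positivity),
      Real.sqrt_nonneg (1 + ‖ζ‖ ^ 2)]
  have hA1 : 1 ≤ jb ξ := one_le_jb ξ
  have hB1 : 1 ≤ jb ζ := one_le_jb ζ
  have hnn : (0:ℝ) ≤ jb ξ + jb ζ := by linarith
  have htri : ‖ξ + ζ‖ ≤ ‖ξ‖ + ‖ζ‖ := norm_add_le ξ ζ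
  have key : 1 + ‖ξ + ζ‖ ^ 2 ≤ (jb ξ + jb ζ) ^ 2 := by
    have h1 : ‖ξ + ζ‖ ^ 2 ≤ (‖ξ‖ + ‖ζ‖) ^ 2 := by
      apply sq_le_sq' (by linarith [norm_nonneg (ξ + ζ)]) htri
    have hAB : ‖ξ‖ * ‖ζ‖ ≤ jb ξ * jb ζ := by
      apply mul_le_mul hA hB hb (by linarith)
    have hsqA : jb ξ ^ 2 = 1 + ‖ξ‖ ^ 2 := Real.sq_sqrt (by positivity)
    have hsqB : jb ζ ^ 2 = 1 + ‖ζ‖ ^ 2 := Real.sq_sqrt (by positivity)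
    nlinarith
  calc jb (ξ + ζ) ≤ Real.sqrt ((jb ξ + jb ζ) ^ 2) := Real.sqrt_le_sqrt key
    _ = jb ξ + jb ζ := Real.sqrt_sq hnn

lemma eta_mono (κ : ℝ) (hκ0 : 0 < κ) (hκ1 : κ < 1) :
    MonotoneOn (fun s : ℝ => s * (Real.log s + 1) ^ (-κ)) (Ici 1) := by
  have hcont : ContinuousOn (fun s : ℝ => s * (Real.log s + 1) ^ (-κ)) (Ici 1) := by
    apply ContinuousOn.mul continuousOn_id
    apply ContinuousOn.rpow_const
    · exact (Real.continuousOn_log.mono (fun x hx => by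
        simp only [mem_compl_iff, mem_singleton_iff]
        intro h; rw [h] at hx; norm_num at hx)).add continuousOn_const
    · intro x hx
      left
      have : 0 ≤ Real.log x := Real.log_nonneg hx
      linarith
  apply monotoneOn_of_deriv_nonneg (convex_Ici 1) hcont
  · intro x hx
    rw [interior_Ici] at hx
    have hx1 : (1:ℝ) < x := hx
    have hlog : 0 < Real.log x + 1 := by
      have := Real.log_nonneg hx1.le; linarith
    have hd : HasDerivAt (fun s : ℝ => s * (Real.log s + 1) ^ (-κ))
        (1 * (Real.log x + 1) ^ (-κ) +
          x * (1 / x * -κ * (Real.log x + 1) ^ (-κ - 1))) x := by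
      have h1 : HasDerivAt (fun s : ℝ => Real.log s + 1) (1 / x) x := by
        simpa using (Real.hasDerivAt_log (by linarith : x ≠ 0)).add_const 1
      have h2 := h1.rpow_const (p := -κ) (Or.inl (ne_of_gt hlog))
      exact (hasDerivAt_id x).mul h2
    exact (hd.differentiableAt).differentiableWithinAt
  · intro x hx
    rw [interior_Ici] at hx
    have hx1 : (1:ℝ) < x := hx
    have hx0 : (0:ℝ) < x := by linarith
    have hlog : 0 < Real.log x + 1 := by
      have := Real.log_nonneg hx1.le; linarith
    have hd : HasDerivAt (fun s : ℝ => s * (Real.log s + 1) ^ (-κ))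
        (1 * (Real.log x + 1) ^ (-κ) +
          x * (1 / x * -κ * (Real.log x + 1) ^ (-κ - 1))) x := by
      have h1 : HasDerivAt (fun s : ℝ => Real.log s + 1) (1 / x) x := by
        simpa using (Real.hasDerivAt_log (ne_of_gt hx0)).add_const 1
      have h2 := h1.rpow_const (p := -κ) (Or.inl (ne_of_gt hlog))
      exact (hasDerivAt_id x).mul h2
    rw [hd.deriv]
    have hx' : x * (1 / x) = 1 := mul_one_div_cancel (ne_of_gt hx0)
    have hrw : 1 * (Real.log x + 1) ^ (-κ) +
        x * (1 / x * -κ * (Real.log x + 1) ^ (-κ - 1))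
        = (Real.log x + 1) ^ (-κ) - κ * (Real.log x + 1) ^ (-κ - 1) := by
      field_simp
      ring
    rw [hrw]
    have hsplit : (Real.log x + 1) ^ (-κ) =
        (Real.log x + 1) ^ (-κ - 1) * (Real.log x + 1) := by
      rw [← Real.rpow_add_one (ne_of_gt hlog)]
      ring_nf
    rw [hsplit]
    have hpos : 0 < (Real.log x + 1) ^ (-κ - 1) := Real.rpow_pos_of_pos hlog _
    have h1le : 1 ≤ Real.log x + 1 := by
      have := Real.log_nonneg hx1.le; linarith
    nlinarith

/-- Example 3.7: subadditivity of the weight η(s) = s (log s + 1)^{−κ} in the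
Japanese-bracket variables, for large frequencies. -/
theorem stmt14 {n : ℕ} (κ : ℝ) (hκ0 : 0 < κ) (hκ1 : κ < 1) :
    ∃ S : ℝ, 1 ≤ S ∧ ∀ ξ ζ : EuclideanSpace ℝ (Fin n), S ≤ jb ξ → S ≤ jb ζ →
      jb (ξ + ζ) * (Real.log (jb (ξ + ζ)) + 1) ^ (-κ)
        ≤ jb ξ * (Real.log (jb ξ) + 1) ^ (-κ)
          + jb ζ * (Real.log (jb ζ) + 1) ^ (-κ) := by
  refine ⟨1, le_refl 1, fun ξ ζ hξ hζ => ?_⟩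
  set a := jb ξ with ha
  set b := jb ζ with hb
  set s := jb (ξ + ζ) with hs
  have hs1 : 1 ≤ s := one_le_jb _
  have hab : s ≤ a + b := jb_triangle ξ ζ
  have ha1 : (1:ℝ) ≤ a := hξ
  have hb1 : (1:ℝ) ≤ b := hζ
  have hla : 0 < Real.log a + 1 := by have := Real.log_nonneg ha1; linarith
  have hlb : 0 < Real.log b + 1 := by have := Real.log_nonneg hb1; linarith
  -- monotonicity step
  have hmono := eta_mono κ hκ0 hκ1 (mem_Ici.mpr hs1)
    (mem_Ici.mpr (by linarith : (1:ℝ) ≤ a + b)) hab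
  refine le_trans hmono ?_
  -- subadditivity step for a + b
  have hT1 : (Real.log (a + b) + 1) ^ (-κ) ≤ (Real.log a + 1) ^ (-κ) := by
    apply Real.rpow_le_rpow_of_nonpos hla _ (by linarith)
    have : Real.log a ≤ Real.log (a + b) :=
      Real.log_le_log (by linarith) (by linarith)
    linarith
  have hT2 : (Real.log (a + b) + 1) ^ (-κ) ≤ (Real.log b + 1) ^ (-κ) := by
    apply Real.rpow_le_rpow_of_nonpos hlb _ (by linarith)
    have : Real.log b ≤ Real.log (a + b) :=
      Real.log_le_log (by linarith) (by linarith)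
    linarith
  have ha0 : (0:ℝ) ≤ a := by linarith
  have hb0 : (0:ℝ) ≤ b := by linarith
  calc (a + b) * (Real.log (a + b) + 1) ^ (-κ)
      = a * (Real.log (a + b) + 1) ^ (-κ) + b * (Real.log (a + b) + 1) ^ (-κ) := by ring
    _ ≤ a * (Real.log a + 1) ^ (-κ) + b * (Real.log b + 1) ^ (-κ) := by
        gcongr
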